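/- (Concentration of radial norms, Lemma 1.) Fix β > 0 and for each integer m ≥ 1 let μ_{m,β} be the probability measure on ℝ^m with Lebesgue density [βΓ(m/2) / (π^{m/2} Γ(m/(2β)) 2^{m/(2β)})] exp(−(1/2)‖x‖^{2β}). Then for every ε > 0, μ_{m,β}({x ∈ ℝ^m : |‖x‖ / m^{1/(2β)} − (1/β)^{1/(2β)}| > ε}) → 0 as m → ∞; that is, under X ~ MGGD(0, I_m, β), the normalised radius ‖X‖/m^{1/(2β)} converges in probability to (1/β)^{1/(2β)}. -/

import Mathlib

open MeasureTheory Real Filter Topology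
open Set Metric
open scoped ENNReal


lemma myIntegrableOn {p q b : ℝ} (hp : 0 < p) (hq : -1 < q) (hb : 0 < b) :
    IntegrableOn (fun x : ℝ => x ^ q * Real.exp (-b * x ^ p)) (Set.Ioi 0) := by
  set s : ℝ := (q + 1) / p with hs_def
  have hs : 0 < s := div_pos (by linarith) hp
  have h1 : IntegrableOn (fun x : ℝ => Real.exp (-x) * x ^ (s - 1)) (Set.Ioi 0) :=
    Real.GammaIntegral_convergent hs
  have h2 : IntegrableOn (fun x : ℝ => Real.exp (-(b * x)) * (b * x) ^ (s - 1))
      (Set.Ioi 0) := by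
    have := (integrableOn_Ioi_comp_mul_left_iff
      (fun x : ℝ => Real.exp (-x) * x ^ (s - 1)) 0 hb).mpr
    simpa using this (by simpa using h1)
  have h3 : IntegrableOn (fun x : ℝ => Real.exp (-(b * x)) * x ^ (s - 1)) (Set.Ioi 0) := by
    refine IntegrableOn.congr_fun (h2.const_mul (b ^ (-(s - 1)))) (fun x hx => ?_)
      measurableSet_Ioi
    have hx0 : 0 < x := hx
    rw [Real.mul_rpow hb.le hx0.le, ← mul_assoc, mul_comm (b ^ (-(s-1))) (Real.exp (-(b*x))),
      mul_assoc, ← mul_assoc (b ^ (-(s-1))), ← Real.rpow_add hb]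
    ring_nf
    rw [Real.rpow_zero, mul_one]
  have h4 := (integrableOn_Ioi_comp_rpow_iff'
    (fun x : ℝ => Real.exp (-(b * x)) * x ^ (s - 1)) hp.ne').mpr h3
  refine h4.congr_fun (fun x hx => ?_) measurableSet_Ioi
  have hx0 : 0 < x := hx
  dsimp only
  rw [smul_eq_mul, ← Real.rpow_mul hx0.le, ← mul_assoc, mul_comm (x ^ (p-1)), mul_assoc,
    ← Real.rpow_add hx0]
  have : p - 1 + p * (s - 1) = q := by rw [hs_def]; field_simp; ring
  rw [neg_mul, this, mul_comm]

lemma myPolar {E : Type*} [NormedAddCommGroup E] [NormedSpace ℝ E]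
    [MeasurableSpace E] [BorelSpace E] [FiniteDimensional ℝ E] [Nontrivial E]
    (μ : Measure E) [μ.IsAddHaarMeasure] (g : ℝ → ℝ≥0∞) (hg : Measurable g) :
    ∫⁻ x, g ‖x‖ ∂μ =
      μ.toSphere Set.univ * ∫⁻ y in Set.Ioi (0:ℝ),
        ENNReal.ofReal (y ^ (Module.finrank ℝ E - 1)) * g y := by
  have h0 : ∫⁻ x : ({(0:E)}ᶜ : Set E), g ‖(x : E)‖ ∂(μ.comap (↑)) = ∫⁻ x, g ‖x‖ ∂μ := by
    rw [lintegral_subtype_comap (measurableSet_singleton (0:E)).compl (fun y : E => g ‖y‖),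
      restrict_compl_singleton]
  rw [← h0]
  have h1 := (μ.measurePreserving_homeomorphUnitSphereProd).lintegral_comp_emb
    (Homeomorph.measurableEmbedding _)
    (fun p : sphere (0:E) 1 × Ioi (0:ℝ) => g p.2)
  have hg2 : Measurable (fun y : Ioi (0:ℝ) => g ↑y) := hg.comp measurable_subtype_coe
  calc ∫⁻ x : ({(0:E)}ᶜ : Set E), g ‖(x : E)‖ ∂(μ.comap (↑))
      = ∫⁻ x : ({(0:E)}ᶜ : Set E), g ((homeomorphUnitSphereProd E x).2 : ℝ)
          ∂(μ.comap (↑)) := lintegral_congr (fun x => by simp)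
    _ = ∫⁻ p : sphere (0:E) 1 × Ioi (0:ℝ), g p.2
          ∂(μ.toSphere.prod (Measure.volumeIoiPow (Module.finrank ℝ E - 1))) := h1
    _ = (∫⁻ _ : sphere (0:E) 1, (1:ℝ≥0∞) ∂μ.toSphere) *
          ∫⁻ y : Ioi (0:ℝ), g y ∂(Measure.volumeIoiPow (Module.finrank ℝ E - 1)) := by
        rw [← lintegral_prod_mul (f := fun _ : sphere (0:E) 1 => (1:ℝ≥0∞))
          (g := fun y : Ioi (0:ℝ) => g ↑y) aemeasurable_const hg2.aemeasurable]
        simp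
    _ = μ.toSphere Set.univ *
          ∫⁻ y : Ioi (0:ℝ), g y ∂(Measure.volumeIoiPow (Module.finrank ℝ E - 1)) := by
        rw [lintegral_one]
    _ = μ.toSphere Set.univ * ∫⁻ y in Set.Ioi (0:ℝ),
          ENNReal.ofReal (y ^ (Module.finrank ℝ E - 1)) * g y := by
        congr 1
        rw [Measure.volumeIoiPow, lintegral_withDensity_eq_lintegral_mul _
          ((measurable_subtype_coe.pow_const _).ennreal_ofReal) hg2,
          ← lintegral_subtype_comap measurableSet_Ioi
            (fun y : ℝ => ENNReal.ofReal (y ^ (Module.finrank ℝ E - 1)) * g y)]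
        rfl

lemma myI {β : ℝ} (hβ : 0 < β) {q : ℝ} (hq : -1 < q) :
    ∫ y in Ioi (0:ℝ), y ^ q * Real.exp (-(1/2) * y ^ (2*β)) =
      2 ^ ((q+1)/(2*β)) * (1/(2*β)) * Real.Gamma ((q+1)/(2*β)) := by
  have h := integral_rpow_mul_exp_neg_mul_rpow (p := 2*β) (q := q) (b := 1/2)
    (by positivity) hq (by norm_num)
  have h2 : ((1:ℝ)/2) ^ (-(q + 1) / (2*β)) = 2 ^ ((q+1)/(2*β)) := by
    rw [one_div, ← Real.rpow_neg_one (2:ℝ), ← Real.rpow_mul (by norm_num : (0:ℝ) ≤ 2)]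
    congr 1; ring
  rw [h, h2]


/-- The standardised MGGD(0, Iₘ, β) measure on ℝ^m: the measure with Lebesgue density
`[β Γ(m/2) / (π^{m/2} Γ(m/(2β)) 2^{m/(2β)})] exp(−(1/2)‖x‖^{2β})`. -/
noncomputable def mggdStd (m : ℕ) (β : ℝ) : Measure (EuclideanSpace ℝ (Fin m)) :=
  volume.withDensity fun x => ENNReal.ofReal
    (β * Real.Gamma ((m : ℝ) / 2) /
        (Real.pi ^ ((m : ℝ) / 2) * Real.Gamma ((m : ℝ) / (2 * β)) *
          (2 : ℝ) ^ ((m : ℝ) / (2 * β))) *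
      Real.exp (-(1 / 2) * ‖x‖ ^ (2 * β)))


lemma mggd_moment (β : ℝ) (hβ : 0 < β) (m : ℕ) (hm : 1 ≤ m) :
    ∫⁻ x : EuclideanSpace ℝ (Fin m),
      ENNReal.ofReal ((‖x‖ ^ (2*β) - (m:ℝ)/β)^2) ∂(mggdStd m β)
      = ENNReal.ofReal (2*(m:ℝ)/β) := by
  haveI : Nonempty (Fin m) := ⟨⟨0, hm⟩⟩
  haveI : Nontrivial (EuclideanSpace ℝ (Fin m)) := inferInstance
  have hm0 : (0:ℝ) < m := by exact_mod_cast hm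
  have h2β : (0:ℝ) < 2 * β := by positivity
  have hΓ1 : 0 < Real.Gamma ((m:ℝ)/2) := Real.Gamma_pos_of_pos (by positivity)
  have hΓ2 : 0 < Real.Gamma ((m:ℝ)/(2*β)) := Real.Gamma_pos_of_pos (by positivity)
  have hC : 0 < β * Real.Gamma ((m : ℝ) / 2) /
      (Real.pi ^ ((m : ℝ) / 2) * Real.Gamma ((m : ℝ) / (2 * β)) *
        (2 : ℝ) ^ ((m : ℝ) / (2 * β))) := by
    have := Real.pi_pos
    have h1 : (0:ℝ) < Real.pi ^ ((m : ℝ) / 2) := Real.rpow_pos_of_pos Real.pi_pos _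
    have h2 : (0:ℝ) < (2:ℝ) ^ ((m : ℝ) / (2 * β)) := Real.rpow_pos_of_pos two_pos _
    positivity
  set C : ℝ := β * Real.Gamma ((m : ℝ) / 2) /
      (Real.pi ^ ((m : ℝ) / 2) * Real.Gamma ((m : ℝ) / (2 * β)) *
        (2 : ℝ) ^ ((m : ℝ) / (2 * β))) with hC_def
  set a : ℝ := (m:ℝ)/β with ha_def
  set h : ℝ → ℝ := fun y => C * Real.exp (-(1/2) * y ^ (2*β)) * (y ^ (2*β) - a)^2
    with hh_def
  have hTcont : Continuous fun y : ℝ => y ^ (2*β) :=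
    continuous_id.rpow_const (fun x => Or.inr h2β.le)
  have hhcont : Continuous h := by
    exact (continuous_const.mul (Real.continuous_exp.comp
      (continuous_const.mul hTcont))).mul ((hTcont.sub continuous_const).pow 2)
  have hgmeas : Measurable fun y : ℝ => ENNReal.ofReal (h y) :=
    (ENNReal.continuous_ofReal.comp hhcont).measurable
  have hdens : Measurable fun x : EuclideanSpace ℝ (Fin m) =>
      ENNReal.ofReal (C * Real.exp (-(1/2) * ‖x‖ ^ (2*β))) := by
    exact (ENNReal.continuous_ofReal.comp (continuous_const.mul
      (Real.continuous_exp.comp (continuous_const.mul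
        (continuous_norm.rpow_const (fun x => Or.inr h2β.le)))))).measurable
  have hF : Measurable fun x : EuclideanSpace ℝ (Fin m) =>
      ENNReal.ofReal ((‖x‖ ^ (2*β) - a)^2) := by
    exact (ENNReal.continuous_ofReal.comp
      (((continuous_norm.rpow_const (fun x => Or.inr h2β.le)).sub
        continuous_const).pow 2)).measurable
  rw [mggdStd, lintegral_withDensity_eq_lintegral_mul volume hdens hF]
  have hptwise : ∀ x : EuclideanSpace ℝ (Fin m),
      ENNReal.ofReal (C * Real.exp (-(1/2) * ‖x‖ ^ (2*β))) *
        ENNReal.ofReal ((‖x‖ ^ (2*β) - a)^2)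
      = ENNReal.ofReal (h ‖x‖) := by
    intro x
    rw [← ENNReal.ofReal_mul (by positivity), hh_def]
  simp only [Pi.mul_apply]
  rw [lintegral_congr hptwise, myPolar volume (fun y => ENNReal.ofReal (h y)) hgmeas]
  rw [Measure.toSphere_apply_univ, finrank_euclideanSpace_fin, EuclideanSpace.volume_ball]
  simp only [Fintype.card_fin, ENNReal.ofReal_one, one_pow, one_mul]
  set s : ℝ := (m:ℝ)/(2*β) with hs_def
  have hs : 0 < s := by positivity
  have hq0 : (-1:ℝ) < (m:ℝ) - 1 := by linarith
  have hq1 : (-1:ℝ) < (m:ℝ) - 1 + 2*β := by linarith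
  have hq2 : (-1:ℝ) < (m:ℝ) - 1 + (2*β + 2*β) := by linarith
  have hb2 : (0:ℝ) < 1/2 := by norm_num
  have J0 := myIntegrableOn h2β hq0 hb2
  have J1 := myIntegrableOn h2β hq1 hb2
  have J2 := myIntegrableOn h2β hq2 hb2
  set F3 : ℝ → ℝ := fun y =>
      C * (y ^ ((m:ℝ) - 1 + (2*β + 2*β)) * Real.exp (-(1/2) * y ^ (2*β)))
      - 2*a*C * (y ^ ((m:ℝ) - 1 + 2*β) * Real.exp (-(1/2) * y ^ (2*β)))
      + a^2*C * (y ^ ((m:ℝ) - 1) * Real.exp (-(1/2) * y ^ (2*β))) with hF3_def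
  have hF3int : IntegrableOn F3 (Ioi 0) :=
    ((J2.const_mul C).sub (J1.const_mul (2*a*C))).add (J0.const_mul (a^2*C))
  have heq : ∀ y ∈ Ioi (0:ℝ), y ^ (m-1) * h y = F3 y := by
    intro y hy
    have hy0 : (0:ℝ) < y := hy
    have hnp : (y:ℝ) ^ (m-1) = y ^ ((m:ℝ) - 1) := by
      rw [← Real.rpow_natCast y (m-1), Nat.cast_sub hm, Nat.cast_one]
    have h1 : y ^ ((m:ℝ) - 1 + 2*β) = y ^ ((m:ℝ) - 1) * y ^ (2*β) :=
      Real.rpow_add hy0 _ _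
    have h2 : y ^ ((m:ℝ) - 1 + (2*β + 2*β))
        = y ^ ((m:ℝ) - 1) * (y ^ (2*β) * y ^ (2*β)) := by
      rw [Real.rpow_add hy0, Real.rpow_add hy0]
    simp only [hF3_def, hh_def, hnp, h1, h2]
    ring
  have hint : IntegrableOn (fun y : ℝ => y ^ (m-1) * h y) (Ioi 0) :=
    hF3int.congr_fun (fun y hy => (heq y hy).symm) measurableSet_Ioi
  have hnn : 0 ≤ᵐ[volume.restrict (Ioi 0)] fun y : ℝ => y ^ (m-1) * h y := by
    filter_upwards [ae_restrict_mem measurableSet_Ioi] with y hy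
    exact mul_nonneg (pow_nonneg (le_of_lt hy) _)
      (mul_nonneg (mul_nonneg hC.le (Real.exp_pos _).le) (sq_nonneg _))
  have hinner : ∫⁻ y in Ioi (0:ℝ), ENNReal.ofReal (y ^ (m-1)) * ENNReal.ofReal (h y)
      = ENNReal.ofReal (∫ y in Ioi (0:ℝ), y ^ (m-1) * h y) :=
    calc ∫⁻ y in Ioi (0:ℝ), ENNReal.ofReal (y ^ (m-1)) * ENNReal.ofReal (h y)
        = ∫⁻ y in Ioi (0:ℝ), ENNReal.ofReal (y ^ (m-1) * h y) :=
          setLIntegral_congr_fun measurableSet_Ioi (fun y hy =>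
            (ENNReal.ofReal_mul (pow_nonneg (le_of_lt hy) _)).symm)
      _ = ENNReal.ofReal (∫ y in Ioi (0:ℝ), y ^ (m-1) * h y) :=
          (ofReal_integral_eq_lintegral_ofReal hint hnn).symm
  rw [hinner]
  have hval : ∫ y in Ioi (0:ℝ), y ^ (m-1) * h y
      = C * (2 ^ (s+2) * (1/(2*β)) * Real.Gamma (s+2))
        - 2*a*C * (2 ^ (s+1) * (1/(2*β)) * Real.Gamma (s+1))
        + a^2*C * (2 ^ s * (1/(2*β)) * Real.Gamma s) := by
    have e0 : ((m:ℝ) - 1 + 1)/(2*β) = s := by rw [hs_def]; ring_nf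
    have e1 : ((m:ℝ) - 1 + 2*β + 1)/(2*β) = s + 1 := by
      rw [hs_def]; field_simp; ring
    have e2 : ((m:ℝ) - 1 + (2*β + 2*β) + 1)/(2*β) = s + 2 := by
      rw [hs_def]; field_simp; ring
    have key : ∀ q : ℝ, -1 < q → ∀ c : ℝ,
        ∫ y in Ioi (0:ℝ), c * (y ^ q * Real.exp (-(1/2) * y ^ (2*β)))
          = c * (2 ^ ((q+1)/(2*β)) * (1/(2*β)) * Real.Gamma ((q+1)/(2*β))) := by
      intro q hq c
      rw [MeasureTheory.integral_const_mul, myI hβ hq]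
    have h12 : IntegrableOn (fun y : ℝ =>
        C * (y ^ ((m:ℝ) - 1 + (2*β + 2*β)) * Real.exp (-(1/2) * y ^ (2*β)))
        - 2*a*C * (y ^ ((m:ℝ) - 1 + 2*β) * Real.exp (-(1/2) * y ^ (2*β)))) (Ioi 0) :=
      (J2.const_mul C).sub (J1.const_mul (2*a*C))
    have h3 : IntegrableOn (fun y : ℝ =>
        a^2*C * (y ^ ((m:ℝ) - 1) * Real.exp (-(1/2) * y ^ (2*β)))) (Ioi 0) :=
      J0.const_mul (a^2*C)
    have step1 : ∫ y in Ioi (0:ℝ), y ^ (m-1) * h y = ∫ y in Ioi (0:ℝ), F3 y :=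
      setIntegral_congr_fun measurableSet_Ioi heq
    have step2 : ∫ y in Ioi (0:ℝ), F3 y
        = (∫ y in Ioi (0:ℝ),
            (C * (y ^ ((m:ℝ) - 1 + (2*β + 2*β)) * Real.exp (-(1/2) * y ^ (2*β)))
            - 2*a*C * (y ^ ((m:ℝ) - 1 + 2*β) * Real.exp (-(1/2) * y ^ (2*β)))))
          + ∫ y in Ioi (0:ℝ),
            a^2*C * (y ^ ((m:ℝ) - 1) * Real.exp (-(1/2) * y ^ (2*β))) :=
      integral_add h12 h3
    have step3 : ∫ y in Ioi (0:ℝ),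
          (C * (y ^ ((m:ℝ) - 1 + (2*β + 2*β)) * Real.exp (-(1/2) * y ^ (2*β)))
          - 2*a*C * (y ^ ((m:ℝ) - 1 + 2*β) * Real.exp (-(1/2) * y ^ (2*β))))
        = (∫ y in Ioi (0:ℝ),
            C * (y ^ ((m:ℝ) - 1 + (2*β + 2*β)) * Real.exp (-(1/2) * y ^ (2*β))))
          - ∫ y in Ioi (0:ℝ),
            2*a*C * (y ^ ((m:ℝ) - 1 + 2*β) * Real.exp (-(1/2) * y ^ (2*β))) :=
      integral_sub (J2.const_mul C) (J1.const_mul (2*a*C))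
    rw [step1, step2, step3, key _ hq0, key _ hq1, key _ hq2, e0, e1, e2]
  rw [hval]
  have hΓm1 : 0 < Real.Gamma ((m:ℝ)/2 + 1) := Real.Gamma_pos_of_pos (by positivity)
  have hVnn : (0:ℝ) ≤ Real.sqrt Real.pi ^ m / Real.Gamma ((m:ℝ)/2 + 1) :=
    div_nonneg (pow_nonneg (Real.sqrt_nonneg _) _) hΓm1.le
  rw [← ENNReal.ofReal_natCast m, ← ENNReal.ofReal_mul (Nat.cast_nonneg m),
    ← ENNReal.ofReal_mul (mul_nonneg (Nat.cast_nonneg m) hVnn)]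
  apply congrArg ENNReal.ofReal
  have hπ : Real.sqrt Real.pi ^ m = Real.pi ^ ((m:ℝ)/2) := by
    rw [Real.sqrt_eq_rpow, ← Real.rpow_natCast (Real.pi ^ ((1:ℝ)/2)) m,
      ← Real.rpow_mul Real.pi_pos.le]
    congr 1
    ring
  have hΓm : Real.Gamma ((m:ℝ)/2 + 1) = ((m:ℝ)/2) * Real.Gamma ((m:ℝ)/2) :=
    Real.Gamma_add_one (by positivity)
  have hΓs1 : Real.Gamma (s+1) = s * Real.Gamma s := Real.Gamma_add_one hs.ne'
  have hΓs2 : Real.Gamma (s+2) = (s+1) * (s * Real.Gamma s) := by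
    rw [show s+(2:ℝ) = (s+1)+1 by ring, Real.Gamma_add_one (by positivity), hΓs1]
  have hp1 : (2:ℝ) ^ (s+1) = 2^s * 2 := by
    rw [Real.rpow_add two_pos, Real.rpow_one]
  have h4 : (2:ℝ) ^ (2:ℝ) = 4 := by
    rw [Real.rpow_two]; norm_num
  have hp2 : (2:ℝ) ^ (s+2) = 2^s * 4 := by
    rw [Real.rpow_add two_pos, h4]
  rw [hπ, hΓm, hΓs1, hΓs2, hp1, hp2, hC_def, ha_def, hs_def]
  have hπ0 : Real.pi ^ ((m:ℝ)/2) ≠ 0 := (Real.rpow_pos_of_pos Real.pi_pos _).ne'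
  have h20 : (2:ℝ) ^ ((m:ℝ)/(2*β)) ≠ 0 := (Real.rpow_pos_of_pos two_pos _).ne'
  have hΓ20 : Real.Gamma ((m:ℝ)/(2*β)) ≠ 0 := hΓ2.ne'
  have hΓ10 : Real.Gamma ((m:ℝ)/2) ≠ 0 := hΓ1.ne'
  field_simp
  ring

/-- Concentration of radial norms, Lemma 1: for fixed `β > 0` and any
`ε > 0`, `μ_{m,β}({x : |‖x‖/m^{1/(2β)} − (1/β)^{1/(2β)}| > ε}) → 0` as `m → ∞`:
under `X ~ MGGD(0, Iₘ, β)`, `‖X‖/m^{1/(2β)}` converges in probability to `(1/β)^{1/(2β)}`. -/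
theorem mggd_norm_concentration
    (β : ℝ) (hβ : 0 < β) (ε : ℝ) (hε : 0 < ε) :
    Tendsto (fun m : ℕ =>
        mggdStd m β {x : EuclideanSpace ℝ (Fin m) |
          ε < |‖x‖ / (m : ℝ) ^ (1 / (2 * β)) - (1 / β) ^ (1 / (2 * β))|})
      atTop (𝓝 0) := by
  have h2β : (0:ℝ) < 2 * β := by positivity
  set c : ℝ := (1/β) ^ (1/(2*β)) with hc_def
  have hc : 0 < c := Real.rpow_pos_of_pos (one_div_pos.mpr hβ) _
  have hcpow : c ^ (2*β) = 1/β := by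
    rw [hc_def, ← Real.rpow_mul (one_div_pos.mpr hβ).le,
      show 1/(2*β) * (2*β) = 1 by field_simp, Real.rpow_one]
  set δ : ℝ := min ((c+ε) ^ (2*β) - 1/β) (1/β - (max (c-ε) 0) ^ (2*β)) with hδ_def
  have hδ1 : 0 < (c+ε) ^ (2*β) - 1/β := by
    have := Real.rpow_lt_rpow hc.le (lt_add_of_pos_right c hε) h2β
    rw [hcpow] at this; linarith
  have hδ2 : 0 < 1/β - (max (c-ε) 0) ^ (2*β) := by
    rcases le_or_gt (c-ε) 0 with hle | hlt
    · rw [max_eq_right hle, Real.zero_rpow h2β.ne']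
      have := one_div_pos.mpr hβ
      linarith
    · rw [max_eq_left hlt.le]
      have := Real.rpow_lt_rpow hlt.le (by linarith : c - ε < c) h2β
      rw [hcpow] at this; linarith
  have hδ : 0 < δ := lt_min hδ1 hδ2
  have hbound : ∀ m : ℕ, 1 ≤ m →
      mggdStd m β {x : EuclideanSpace ℝ (Fin m) |
          ε < |‖x‖ / (m : ℝ) ^ (1 / (2 * β)) - (1 / β) ^ (1 / (2 * β))|}
        ≤ ENNReal.ofReal ((2/(β*δ^2)) / m) := by
    intro m hm
    have hm0 : (0:ℝ) < m := by exact_mod_cast hm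
    set M : ℝ := (m:ℝ) ^ (1/(2*β)) with hM_def
    have hM : 0 < M := Real.rpow_pos_of_pos hm0 _
    have hMpow : M ^ (2*β) = m := by
      rw [hM_def, ← Real.rpow_mul hm0.le, show 1/(2*β) * (2*β) = 1 by field_simp,
        Real.rpow_one]
    set F : EuclideanSpace ℝ (Fin m) → ℝ≥0∞ :=
      fun x => ENNReal.ofReal ((‖x‖ ^ (2*β) - (m:ℝ)/β)^2) with hF_def
    have hFmeas : Measurable F := by
      exact (ENNReal.continuous_ofReal.comp
        (((continuous_norm.rpow_const (fun x => Or.inr h2β.le)).sub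
          continuous_const).pow 2)).measurable
    have hsub : {x : EuclideanSpace ℝ (Fin m) |
        ε < |‖x‖ / (m : ℝ) ^ (1 / (2 * β)) - (1 / β) ^ (1 / (2 * β))|}
        ⊆ {x : EuclideanSpace ℝ (Fin m) | ENNReal.ofReal ((δ*m)^2) ≤ F x} := by
      intro x hx
      simp only [Set.mem_setOf_eq] at hx ⊢
      apply ENNReal.ofReal_le_ofReal
      have hr : (0:ℝ) ≤ ‖x‖ := norm_nonneg x
      have key : δ * m ≤ |‖x‖ ^ (2*β) - (m:ℝ)/β| := by
        rcases lt_abs.mp hx with h1 | h1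
        · have hgt : (c + ε) * M < ‖x‖ := by
            rw [← lt_div_iff₀ hM]; linarith
          have h2 : ((c+ε) * M) ^ (2*β) < ‖x‖ ^ (2*β) :=
            Real.rpow_lt_rpow (by positivity) hgt h2β
          rw [Real.mul_rpow (by positivity) hM.le, hMpow] at h2
          have h3 : ((c+ε) ^ (2*β) - 1/β) * m ≤ ‖x‖ ^ (2*β) - (m:ℝ)/β := by
            have : (1/β) * m = (m:ℝ)/β := by field_simp
            nlinarith
          have h4 : δ * m ≤ ((c+ε) ^ (2*β) - 1/β) * m :=
            mul_le_mul_of_nonneg_right (min_le_left _ _) hm0.le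
          calc δ * m ≤ ‖x‖ ^ (2*β) - (m:ℝ)/β := le_trans h4 h3
            _ ≤ |‖x‖ ^ (2*β) - (m:ℝ)/β| := le_abs_self _
        · have hlt : ‖x‖ / M < c - ε := by linarith
          have hce : 0 < c - ε := lt_of_le_of_lt (div_nonneg hr hM.le) hlt
          have hmax : max (c-ε) 0 = c - ε := max_eq_left hce.le
          have hgt : ‖x‖ < (c - ε) * M := by
            rw [← div_lt_iff₀ hM]; exact hlt
          have h2 : ‖x‖ ^ (2*β) < ((c-ε) * M) ^ (2*β) :=
            Real.rpow_lt_rpow hr hgt h2β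
          rw [Real.mul_rpow hce.le hM.le, hMpow] at h2
          have h3 : (1/β - (c-ε) ^ (2*β)) * m ≤ (m:ℝ)/β - ‖x‖ ^ (2*β) := by
            have : (1/β) * m = (m:ℝ)/β := by field_simp
            nlinarith
          have h4 : δ * m ≤ (1/β - (c-ε) ^ (2*β)) * m := by
            refine mul_le_mul_of_nonneg_right ?_ hm0.le
            rw [hδ_def, hmax]
            exact min_le_right _ _
          calc δ * m ≤ (m:ℝ)/β - ‖x‖ ^ (2*β) := le_trans h4 h3
            _ ≤ |‖x‖ ^ (2*β) - (m:ℝ)/β| := by rw [abs_sub_comm]; exact le_abs_self _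
      calc (δ*m)^2 = |δ*m|^2 := (sq_abs _).symm
        _ ≤ |‖x‖ ^ (2*β) - (m:ℝ)/β|^2 := by
            apply pow_le_pow_left₀ (abs_nonneg _)
            rw [abs_of_nonneg (by positivity : (0:ℝ) ≤ δ*m)]
            exact key
        _ = (‖x‖ ^ (2*β) - (m:ℝ)/β)^2 := sq_abs _
    have hδm : (0:ℝ) < (δ*m)^2 := by positivity
    calc mggdStd m β {x : EuclideanSpace ℝ (Fin m) |
          ε < |‖x‖ / (m : ℝ) ^ (1 / (2 * β)) - (1 / β) ^ (1 / (2 * β))|}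
        ≤ mggdStd m β {x : EuclideanSpace ℝ (Fin m) |
            ENNReal.ofReal ((δ*m)^2) ≤ F x} := measure_mono hsub
      _ ≤ (∫⁻ x, F x ∂(mggdStd m β)) / ENNReal.ofReal ((δ*m)^2) :=
          meas_ge_le_lintegral_div hFmeas.aemeasurable
            (by simp [ENNReal.ofReal_eq_zero, not_le, hδm]; exact ⟨hδ.ne', by omega⟩) ENNReal.ofReal_ne_top
      _ = ENNReal.ofReal (2*(m:ℝ)/β) / ENNReal.ofReal ((δ*m)^2) := by
          rw [hF_def, mggd_moment β hβ m hm]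
      _ = ENNReal.ofReal ((2*(m:ℝ)/β) / ((δ*m)^2)) :=
          (ENNReal.ofReal_div_of_pos hδm).symm
      _ = ENNReal.ofReal ((2/(β*δ^2)) / m) := by
          congr 1
          field_simp
  have htend : Tendsto (fun m : ℕ => ENNReal.ofReal ((2/(β*δ^2)) / m)) atTop (𝓝 0) := by
    have := ENNReal.tendsto_ofReal (tendsto_const_div_atTop_nhds_zero_nat (2/(β*δ^2)))
    simpa using this
  refine tendsto_of_tendsto_of_tendsto_of_le_of_le' tendsto_const_nhds htend
    (Eventually.of_forall fun m => zero_le) ?_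
  filter_upwards [eventually_ge_atTop 1] with m hm using hbound m hm
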